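/- Let $2 \leq \gamma < 3$ and let $F : \mathbb{R}^n \to \mathbb{R}$ be twice differentiable with $|DF| \le M$, $|D^2F| \le M$, and $|D^2F(x) - D^2F(y)| \le M|x-y|^{\gamma-2}$ for all $x,y$. Suppose $a,b,c,d \in \mathbb{R}^n$ with $\lambda \le 1$ satisfy $|a-b| < \lambda$, $|c-d| < \lambda$, $|a-c| < \epsilon$ and $|a-b-c+d| < \sigma$. Then $|F(b)-F(a)-DF(a)(b-a)-F(d)+F(c)+DF(c)(d-c)| \le C\lambda(\lambda^{\gamma-2}\epsilon + \sigma)$, where $C$ is a constant depending only on $M$, $n$, and $\gamma$. -/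

import Mathlib

open Set

/-- Lemma 3(b) of the paper: four-point difference estimate for `C^γ` functions,
`2 ≤ γ < 3`.  If `F` is twice differentiable with `|DF| ≤ M`, `|D²F| ≤ M` and `D²F`
globally Hölder of exponent `γ-2` with constant `M`, `λ ≤ 1`, and `|a-b| < λ`,
`|c-d| < λ`, `|a-c| < ε`, `|a-b-c+d| < σ`, then
`|F(b)-F(a)-DF(a)(b-a)-F(d)+F(c)+DF(c)(d-c)| ≤ Cλ(λ^{γ-2}ε + σ)` with `C` depending
only on `n`, `γ` and `M`. -/
theorem four_point_estimate_C_gamma_lt_three (n : ℕ) (γ M : ℝ)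
    (hγ₁ : 2 ≤ γ) (hγ₂ : γ < 3) (hM : 0 < M) :
    ∃ C > 0, ∀ F : EuclideanSpace ℝ (Fin n) → ℝ,
      Differentiable ℝ F →
      Differentiable ℝ (fderiv ℝ F) →
      (∀ x, ‖fderiv ℝ F x‖ ≤ M) →
      (∀ x, ‖fderiv ℝ (fderiv ℝ F) x‖ ≤ M) →
      (∀ x y, ‖fderiv ℝ (fderiv ℝ F) x - fderiv ℝ (fderiv ℝ F) y‖
        ≤ M * ‖x - y‖ ^ (γ - 2)) →
      ∀ (a b c d : EuclideanSpace ℝ (Fin n)) (lam ε σ : ℝ),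
        lam ≤ 1 →
        ‖a - b‖ < lam → ‖c - d‖ < lam → ‖a - c‖ < ε → ‖a - b - c + d‖ < σ →
        |F b - F a - fderiv ℝ F a (b - a) - F d + F c + fderiv ℝ F c (d - c)|
          ≤ C * lam * (lam ^ (γ - 2) * ε + σ) := by
  refine ⟨M, hM, ?_⟩
  intro F hF hF' hM1 hM2 hHol a b c d lam ε σ hlam hab hcd hac hσ
  have hγ0 : (0:ℝ) ≤ γ - 2 := by linarith
  have hlam0 : 0 < lam := lt_of_le_of_lt (norm_nonneg _) hab
  have hd1 : ∀ z, HasFDerivAt F (fderiv ℝ F z) z := fun z => (hF z).hasFDerivAt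
  have hd2 : ∀ z, HasFDerivAt (fderiv ℝ F) (fderiv ℝ (fderiv ℝ F) z) z :=
    fun z => (hF' z).hasFDerivAt
  have hsymm : ∀ x v w, fderiv ℝ (fderiv ℝ F) x v w = fderiv ℝ (fderiv ℝ F) x w v :=
    fun x => second_derivative_symmetric hd1 (hd2 x)
  -- `fderiv F` is `M`-Lipschitz
  have lipf' : ∀ x y : EuclideanSpace ℝ (Fin n),
      ‖fderiv ℝ F x - fderiv ℝ F y‖ ≤ M * ‖x - y‖ := by
    intro x y
    exact Convex.norm_image_sub_le_of_norm_hasFDerivWithin_le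
      (fun z _ => (hd2 z).hasFDerivWithinAt) (fun z _ => hM2 z) convex_univ
      (mem_univ y) (mem_univ x)
  -- Taylor-type estimate for the first derivative
  have taylor : ∀ (x h : EuclideanSpace ℝ (Fin n)),
      ‖fderiv ℝ F (x + h) - fderiv ℝ F x - fderiv ℝ (fderiv ℝ F) x h‖
        ≤ M * ‖h‖ ^ (γ - 2) * ‖h‖ := by
    intro x h
    set T := fderiv ℝ (fderiv ℝ F) x h with hT
    have hψd : ∀ s : ℝ, HasDerivAt
        (fun s : ℝ => fderiv ℝ F (x + s • h) - s • T)
        (fderiv ℝ (fderiv ℝ F) (x + s • h) h - T) s := by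
      intro s
      have hline : HasDerivAt (fun s : ℝ => x + s • h) h s := by
        simpa using ((hasDerivAt_id s).smul_const h).const_add x
      have h1 : HasDerivAt (fun s : ℝ => fderiv ℝ F (x + s • h))
          (fderiv ℝ (fderiv ℝ F) (x + s • h) h) s := by
        simpa [Function.comp_def] using (hd2 (x + s • h)).comp_hasDerivAt s hline
      have h2 : HasDerivAt (fun s : ℝ => s • T) T s := by
        simpa using (hasDerivAt_id s).smul_const T
      exact h1.sub h2
    have bound : ∀ s ∈ Ico (0:ℝ) 1,
        ‖fderiv ℝ (fderiv ℝ F) (x + s • h) h - T‖ ≤ M * ‖h‖ ^ (γ - 2) * ‖h‖ := by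
      intro s hs
      have h1 : ‖fderiv ℝ (fderiv ℝ F) (x + s • h) h - T‖
          ≤ ‖fderiv ℝ (fderiv ℝ F) (x + s • h) - fderiv ℝ (fderiv ℝ F) x‖ * ‖h‖ := by
        rw [hT]
        simpa using (fderiv ℝ (fderiv ℝ F) (x + s • h) - fderiv ℝ (fderiv ℝ F) x).le_opNorm h
      have h2 : ‖fderiv ℝ (fderiv ℝ F) (x + s • h) - fderiv ℝ (fderiv ℝ F) x‖
          ≤ M * ‖s • h‖ ^ (γ - 2) := by
        simpa using hHol (x + s • h) x
      have h3 : ‖s • h‖ ^ (γ - 2) ≤ ‖h‖ ^ (γ - 2) := by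
        apply Real.rpow_le_rpow (norm_nonneg _) _ hγ0
        rw [norm_smul]
        calc ‖(s:ℝ)‖ * ‖h‖ ≤ 1 * ‖h‖ := by
              apply mul_le_mul_of_nonneg_right _ (norm_nonneg h)
              rw [Real.norm_eq_abs, abs_of_nonneg hs.1]
              exact le_of_lt hs.2
          _ = ‖h‖ := one_mul _
      calc ‖fderiv ℝ (fderiv ℝ F) (x + s • h) h - T‖
          ≤ ‖fderiv ℝ (fderiv ℝ F) (x + s • h) - fderiv ℝ (fderiv ℝ F) x‖ * ‖h‖ := h1
        _ ≤ (M * ‖h‖ ^ (γ - 2)) * ‖h‖ := by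
            apply mul_le_mul_of_nonneg_right _ (norm_nonneg h)
            exact h2.trans (mul_le_mul_of_nonneg_left h3 (le_of_lt hM))
    have key := norm_image_sub_le_of_norm_deriv_le_segment_01'
      (fun s _ => (hψd s).hasDerivWithinAt) bound
    have e : ((fun s : ℝ => fderiv ℝ F (x + s • h) - s • T) 1)
        - ((fun s : ℝ => fderiv ℝ F (x + s • h) - s • T) 0)
        = fderiv ℝ F (x + h) - fderiv ℝ F x - T := by
      simp only [one_smul, zero_smul, sub_zero, add_zero]
      abel
    rw [e] at key
    exact key
  -- derivative of G y = F (y + (b-a)) - F y - (fderiv F y) (b-a)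
  have hGd : ∀ x : EuclideanSpace ℝ (Fin n),
      HasFDerivAt (fun y => F (y + (b-a)) - F y - fderiv ℝ F y (b-a))
        (fderiv ℝ F (x + (b-a)) - fderiv ℝ F x - fderiv ℝ (fderiv ℝ F) x (b-a)) x := by
    intro x
    have hline : HasFDerivAt (fun y : EuclideanSpace ℝ (Fin n) => y + (b-a))
        (ContinuousLinearMap.id ℝ (EuclideanSpace ℝ (Fin n))) x :=
      (hasFDerivAt_id x).add_const _
    have h1 : HasFDerivAt (fun y : EuclideanSpace ℝ (Fin n) => F (y + (b-a)))
        (fderiv ℝ F (x + (b-a))) x := by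
      simpa [Function.comp_def] using (hd1 (x + (b-a))).comp x hline
    have h3 : HasFDerivAt (fun y : EuclideanSpace ℝ (Fin n) => fderiv ℝ F y (b-a))
        ((ContinuousLinearMap.apply ℝ ℝ (b-a)).comp (fderiv ℝ (fderiv ℝ F) x)) x :=
      (ContinuousLinearMap.apply ℝ ℝ (b-a)).hasFDerivAt.comp x (hd2 x)
    have heq : (ContinuousLinearMap.apply ℝ ℝ (b-a)).comp (fderiv ℝ (fderiv ℝ F) x)
        = fderiv ℝ (fderiv ℝ F) x (b-a) := by
      ext v
      simp only [ContinuousLinearMap.coe_comp', Function.comp_apply,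
        ContinuousLinearMap.apply_apply]
      exact hsymm x v (b-a)
    have := (h1.sub (hd1 x)).sub h3
    rwa [heq] at this
  -- derivative of H u = F (c + u) - (fderiv F c) u
  have hHd : ∀ u : EuclideanSpace ℝ (Fin n),
      HasFDerivAt (fun u => F (c + u) - fderiv ℝ F c u)
        (fderiv ℝ F (c + u) - fderiv ℝ F c) u := by
    intro u
    have hline : HasFDerivAt (fun u : EuclideanSpace ℝ (Fin n) => c + u)
        (ContinuousLinearMap.id ℝ (EuclideanSpace ℝ (Fin n))) u :=
      (hasFDerivAt_id u).const_add c
    have h1 : HasFDerivAt (fun u : EuclideanSpace ℝ (Fin n) => F (c + u))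
        (fderiv ℝ F (c + u)) u := by
      simpa [Function.comp_def] using (hd1 (c + u)).comp u hline
    exact h1.sub (fderiv ℝ F c).hasFDerivAt
  -- term 1 estimate
  have term1 : ‖(F (a + (b-a)) - F a - fderiv ℝ F a (b-a))
      - (F (c + (b-a)) - F c - fderiv ℝ F c (b-a))‖
      ≤ (M * ‖b-a‖ ^ (γ-2) * ‖b-a‖) * ‖a - c‖ :=
    Convex.norm_image_sub_le_of_norm_hasFDerivWithin_le
      (fun x _ => (hGd x).hasFDerivWithinAt)
      (fun x _ => taylor x (b-a)) convex_univ (mem_univ c) (mem_univ a)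
  -- term 2 estimate
  have hmemh : (b - a) ∈ Metric.closedBall (0 : EuclideanSpace ℝ (Fin n)) lam := by
    rw [Metric.mem_closedBall, dist_zero_right]
    rw [norm_sub_rev]
    exact le_of_lt hab
  have hmemk : (d - c) ∈ Metric.closedBall (0 : EuclideanSpace ℝ (Fin n)) lam := by
    rw [Metric.mem_closedBall, dist_zero_right]
    rw [norm_sub_rev]
    exact le_of_lt hcd
  have term2 : ‖(F (c + (b-a)) - fderiv ℝ F c (b-a))
      - (F (c + (d-c)) - fderiv ℝ F c (d-c))‖
      ≤ (M * lam) * ‖(b-a) - (d-c)‖ :=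
    Convex.norm_image_sub_le_of_norm_hasFDerivWithin_le
      (fun u _ => (hHd u).hasFDerivWithinAt)
      (fun u hu => by
        have h1 : ‖fderiv ℝ F (c + u) - fderiv ℝ F c‖ ≤ M * ‖(c + u) - c‖ := lipf' _ _
        have h2 : ‖(c + u) - c‖ = ‖u‖ := by rw [add_sub_cancel_left]
        rw [h2] at h1
        refine h1.trans (mul_le_mul_of_nonneg_left ?_ (le_of_lt hM))
        rw [Metric.mem_closedBall, dist_zero_right] at hu
        exact hu)
      (convex_closedBall 0 lam) hmemk hmemh
  -- algebraic identity
  have e1 : a + (b - a) = b := by abel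
  have e2 : c + (d - c) = d := by abel
  have key : F b - F a - fderiv ℝ F a (b - a) - F d + F c + fderiv ℝ F c (d - c)
      = ((F (a + (b-a)) - F a - fderiv ℝ F a (b-a))
          - (F (c + (b-a)) - F c - fderiv ℝ F c (b-a)))
        + ((F (c + (b-a)) - fderiv ℝ F c (b-a))
          - (F (c + (d-c)) - fderiv ℝ F c (d-c))) := by
    rw [e1, e2]; ring
  have hnorm : ‖(b-a) - (d-c)‖ = ‖a - b - c + d‖ := by
    rw [← norm_neg]
    congr 1
    abel
  have hbalam : ‖b - a‖ ≤ lam := by rw [norm_sub_rev]; exact le_of_lt hab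
  have hrpow : ‖b - a‖ ^ (γ - 2) ≤ lam ^ (γ - 2) :=
    Real.rpow_le_rpow (norm_nonneg _) hbalam hγ0
  have hrnn : (0:ℝ) ≤ ‖b - a‖ ^ (γ - 2) := Real.rpow_nonneg (norm_nonneg _) _
  have hlnn : (0:ℝ) ≤ lam ^ (γ - 2) := Real.rpow_nonneg (le_of_lt hlam0) _
  calc |F b - F a - fderiv ℝ F a (b - a) - F d + F c + fderiv ℝ F c (d - c)|
      = ‖((F (a + (b-a)) - F a - fderiv ℝ F a (b-a))
          - (F (c + (b-a)) - F c - fderiv ℝ F c (b-a)))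
        + ((F (c + (b-a)) - fderiv ℝ F c (b-a))
          - (F (c + (d-c)) - fderiv ℝ F c (d-c)))‖ := by
        rw [← key]; exact (Real.norm_eq_abs _).symm
    _ ≤ ‖(F (a + (b-a)) - F a - fderiv ℝ F a (b-a))
          - (F (c + (b-a)) - F c - fderiv ℝ F c (b-a))‖
        + ‖(F (c + (b-a)) - fderiv ℝ F c (b-a))
          - (F (c + (d-c)) - fderiv ℝ F c (d-c))‖ := norm_add_le _ _
    _ ≤ (M * ‖b-a‖ ^ (γ-2) * ‖b-a‖) * ‖a - c‖ + (M * lam) * ‖(b-a) - (d-c)‖ :=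
        add_le_add term1 term2
    _ ≤ (M * lam ^ (γ-2) * lam) * ε + (M * lam) * σ := by
        apply add_le_add
        · apply mul_le_mul _ (le_of_lt hac) (norm_nonneg _)
          · positivity
          · apply mul_le_mul _ hbalam (norm_nonneg _) (by positivity)
            exact mul_le_mul_of_nonneg_left hrpow (le_of_lt hM)
        · exact mul_le_mul_of_nonneg_left (hnorm ▸ le_of_lt hσ) (by positivity)
    _ = M * lam * (lam ^ (γ - 2) * ε + σ) := by ring
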